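/- arXiv:math/0406236 — 2 statements merged into one kernel-verified Lean document; each statement's English description precedes it below -/
import Mathlib

section
/- The constant L₂ = 1 − Σ_{n=0}^{∞} Γ'(n+1)/Γ(n+1)² satisfies L₂ = 1 + e·Ei(−1), where Ei is the exponential integral. -/
open MeasureTheory

/-- `Ei(-1) = -∫_1^∞ e^{-t}/t dt`. -/
noncomputable def EiNegOne : ℝ := -∫ t in Set.Ioi (1 : ℝ), Real.exp (-t) / t

section L2aux
open Set Real Filter

lemma gamma_int : ∫ t in Ioi (0:ℝ), Real.log t * Real.exp (-t) = -Real.eulerMascheroniConstant := by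
  have h1 := Complex.hasDerivAt_GammaIntegral (s := 1) (by simp)
  have hev : Complex.Gamma =ᶠ[nhds (1:ℂ)] Complex.GammaIntegral := by
    have hopen : IsOpen {s : ℂ | 0 < s.re} := isOpen_lt continuous_const Complex.continuous_re
    filter_upwards [hopen.mem_nhds (by simp : (0:ℝ) < (1:ℂ).re)] with s hs
    exact Complex.Gamma_eq_integral hs
  have h2 := h1.congr_of_eventuallyEq hev
  have h3 := h2.unique Complex.hasDerivAt_Gamma_one
  have h4 : ∫ t in Ioi (0:ℝ), ((t:ℂ) ^ ((1:ℂ) - 1) * (Real.log t * Real.exp (-t))) =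
      ((∫ t in Ioi (0:ℝ), Real.log t * Real.exp (-t) : ℝ) : ℂ) := by
    calc ∫ t in Ioi (0:ℝ), ((t:ℂ) ^ ((1:ℂ) - 1) * (Real.log t * Real.exp (-t)))
        = ∫ t in Ioi (0:ℝ), ((Real.log t * Real.exp (-t) : ℝ) : ℂ) := by
          refine integral_congr_ae (Eventually.of_forall fun t => ?_)
          simp [sub_self, Complex.cpow_zero, Complex.ofReal_mul]
      _ = ((∫ t in Ioi (0:ℝ), Real.log t * Real.exp (-t) : ℝ) : ℂ) := integral_ofReal
  rw [h4] at h3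
  exact_mod_cast h3

lemma log_bound {t : ℝ} (h0 : 0 < t) (h1 : t ≤ 1) : |Real.log t| ≤ 2 * t ^ (-(1/2) : ℝ) := by
  have hlog : Real.log t ≤ 0 := Real.log_nonpos h0.le h1
  have h5 : t⁻¹ ^ ((1:ℝ)/2) = t ^ (-(1/2) : ℝ) := by
    rw [← Real.rpow_neg_one t, ← Real.rpow_mul h0.le]
    norm_num
  have h4 : Real.log (t⁻¹ ^ ((1:ℝ)/2)) ≤ t⁻¹ ^ ((1:ℝ)/2) :=
    (Real.log_le_sub_one_of_pos (Real.rpow_pos_of_pos (inv_pos.mpr h0) _)).trans (by linarith)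
  have h3 : Real.log t⁻¹ = 2 * Real.log (t⁻¹ ^ ((1:ℝ)/2)) := by
    rw [Real.log_rpow (inv_pos.mpr h0)]; ring
  rw [abs_of_nonpos hlog, ← Real.log_inv t, h3, ← h5]
  linarith

lemma a1 : IntegrableOn (fun t => Real.log t * Real.exp (-t)) (Ioc (0:ℝ) 1) := by
  have hmaj : IntegrableOn (fun t : ℝ => 2 * t ^ (-(1/2) : ℝ)) (Ioc (0:ℝ) 1) := by
    have := (intervalIntegral.intervalIntegrable_rpow' (a := 0) (b := 1) (r := -(1/2))
      (by norm_num))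
    rw [intervalIntegrable_iff_integrableOn_Ioc_of_le zero_le_one] at this
    exact this.const_mul 2
  refine hmaj.mono' ?_ ?_
  · refine (ContinuousOn.mul ?_ (Real.continuous_exp.comp continuous_neg).continuousOn).aestronglyMeasurable measurableSet_Ioc
    exact Real.continuousOn_log.mono (fun t ht => ne_of_gt ht.1)
  · filter_upwards [ae_restrict_mem measurableSet_Ioc] with t ht
    have h0 := ht.1
    calc ‖Real.log t * Real.exp (-t)‖ = |Real.log t| * Real.exp (-t) := by
          rw [norm_mul, Real.norm_eq_abs, Real.norm_eq_abs, abs_of_pos (Real.exp_pos _)]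
      _ ≤ |Real.log t| * 1 := by
          exact mul_le_mul_of_nonneg_left (Real.exp_le_one_iff.mpr (by linarith)) (abs_nonneg _)
      _ ≤ 2 * t ^ (-(1/2) : ℝ) := by rw [mul_one]; exact log_bound h0 ht.2

lemma one_sub_exp_neg_le {t : ℝ} (ht : 0 ≤ t) : 1 - Real.exp (-t) ≤ t := by
  have := Real.add_one_le_exp (-t)
  linarith

lemma a2 : IntegrableOn (fun t => (Real.exp (-t) - 1) / t) (Ioc (0:ℝ) 1) := by
  refine Integrable.mono' (g := fun _ => (1:ℝ)) (integrableOn_const measure_Ioc_lt_top.ne) ?_ ?_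
  · refine ContinuousOn.aestronglyMeasurable ?_ measurableSet_Ioc
    exact ContinuousOn.div ((Real.continuous_exp.comp continuous_neg).continuousOn.sub
      continuousOn_const) continuousOn_id (fun t ht => ne_of_gt ht.1)
  · filter_upwards [ae_restrict_mem measurableSet_Ioc] with t ht
    have h0 := ht.1
    rw [Real.norm_eq_abs, abs_div, abs_of_pos h0]
    rw [div_le_iff₀ h0, one_mul]
    have h2 : |Real.exp (-t) - 1| = 1 - Real.exp (-t) := by
      rw [abs_of_nonpos (by linarith [Real.exp_le_one_iff.mpr (by linarith : -t ≤ 0)])]; ring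
    rw [h2]
    exact one_sub_exp_neg_le h0.le

lemma texp_bound {t : ℝ} : t * Real.exp (-t) ≤ 2 * Real.exp (-(1/2) * t) := by
  have h1 : t / 2 ≤ Real.exp (t / 2) := by
    have := Real.add_one_le_exp (t/2); linarith
  have h2 : t * Real.exp (-t) = 2 * ((t/2) * Real.exp (-t)) := by ring
  rw [h2]
  have h3 : (t/2) * Real.exp (-t) ≤ Real.exp (t/2) * Real.exp (-t) :=
    mul_le_mul_of_nonneg_right h1 (Real.exp_pos _).le
  have h4 : Real.exp (t/2) * Real.exp (-t) = Real.exp (-(1/2) * t) := by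
    rw [← Real.exp_add]; ring_nf
  nlinarith [Real.exp_pos (-(1/2) * t)]

lemma a3 : IntegrableOn (fun t => Real.log t * Real.exp (-t)) (Ioi (1:ℝ)) := by
  refine ((exp_neg_integrableOn_Ioi 1 (by norm_num : (0:ℝ) < 1/2)).const_mul 2).mono' ?_ ?_
  · refine (ContinuousOn.mul ?_ (Real.continuous_exp.comp continuous_neg).continuousOn).aestronglyMeasurable measurableSet_Ioi
    exact Real.continuousOn_log.mono (fun t ht => by exact ne_of_gt (lt_trans one_pos ht))
  · filter_upwards [ae_restrict_mem measurableSet_Ioi] with t ht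
    have h1 : (1:ℝ) < t := ht
    have hlog : 0 ≤ Real.log t := Real.log_nonneg h1.le
    rw [Real.norm_eq_abs, abs_mul, abs_of_nonneg hlog, abs_of_pos (Real.exp_pos _)]
    calc Real.log t * Real.exp (-t) ≤ t * Real.exp (-t) :=
          mul_le_mul_of_nonneg_right (by nlinarith [Real.log_le_sub_one_of_pos (by linarith : (0:ℝ) < t)]) (Real.exp_pos _).le
      _ ≤ 2 * Real.exp (-(1/2) * t) := texp_bound

lemma a4 : IntegrableOn (fun t => Real.exp (-t) / t) (Ioi (1:ℝ)) := by
  refine ((exp_neg_integrableOn_Ioi 1 (by norm_num : (0:ℝ) < 1)).mono' ?_ ?_)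
  · refine ContinuousOn.aestronglyMeasurable ?_ measurableSet_Ioi
    exact ContinuousOn.div (Real.continuous_exp.comp continuous_neg).continuousOn
      continuousOn_id (fun t ht => by exact ne_of_gt (lt_trans one_pos ht))
  · filter_upwards [ae_restrict_mem measurableSet_Ioi] with t ht
    have h1 : (1:ℝ) < t := ht
    rw [Real.norm_eq_abs, abs_div, abs_of_pos (Real.exp_pos _), abs_of_pos (by linarith : (0:ℝ) < t)]
    rw [div_le_iff₀ (by linarith : (0:ℝ) < t), neg_one_mul]
    nlinarith [Real.exp_pos (-t)]

-- derivative helpers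
lemma hasDerivAt_G {t : ℝ} (ht : t ≠ 0) :
    HasDerivAt (fun t => (Real.exp (-t) - 1) * Real.log t)
      ((Real.exp (-t) - 1) / t - Real.log t * Real.exp (-t)) t := by
  have h1 : HasDerivAt (fun t : ℝ => Real.exp (-t) - 1) (-Real.exp (-t)) t := by
    simpa using ((hasDerivAt_id t).neg.exp.sub_const 1)
  have h2 : HasDerivAt Real.log t⁻¹ t := Real.hasDerivAt_log ht
  have := h1.mul h2
  exact this.congr_deriv (by ring)

lemma part2 : ∫ t in Ioi (1:ℝ), Real.log t * Real.exp (-t) = ∫ t in Ioi (1:ℝ), Real.exp (-t) / t := by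
  have key : ∫ t in Ioi (1:ℝ), (Real.log t * Real.exp (-t) - Real.exp (-t) / t) = 0 := by
    have hF : ∀ x ∈ Ioi (1:ℝ), HasDerivAt (fun t => -(Real.log t * Real.exp (-t)))
        (Real.log x * Real.exp (-x) - Real.exp (-x) / x) x := by
      intro x hx
      have hx0 : x ≠ 0 := ne_of_gt (lt_trans one_pos hx)
      have h2 : HasDerivAt Real.log x⁻¹ x := Real.hasDerivAt_log hx0
      have h1 : HasDerivAt (fun t : ℝ => Real.exp (-t)) (-Real.exp (-x)) x := by
        simpa using (hasDerivAt_id x).neg.exp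
      have := (h2.mul h1).neg
      exact this.congr_deriv (by ring)
    have hcont : ContinuousWithinAt (fun t => -(Real.log t * Real.exp (-t))) (Ici (1:ℝ)) 1 := by
      apply ContinuousAt.continuousWithinAt
      exact ((Real.continuousAt_log one_ne_zero).mul
        (Real.continuous_exp.comp continuous_neg).continuousAt).neg
    have hint : IntegrableOn (fun t => Real.log t * Real.exp (-t) - Real.exp (-t) / t)
        (Ioi (1:ℝ)) := a3.sub a4
    have htend : Tendsto (fun t => -(Real.log t * Real.exp (-t))) atTop (nhds 0) := by
      rw [show (0:ℝ) = -0 by norm_num]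
      apply Tendsto.neg
      have hub : ∀ᶠ t in atTop, Real.log t * Real.exp (-t) ≤ 2 * Real.exp (-(1/2) * t) := by
        filter_upwards [eventually_ge_atTop (1:ℝ)] with t ht
        calc Real.log t * Real.exp (-t) ≤ t * Real.exp (-t) :=
              mul_le_mul_of_nonneg_right
                (by nlinarith [Real.log_le_sub_one_of_pos (by linarith : (0:ℝ) < t)])
                (Real.exp_pos _).le
          _ ≤ 2 * Real.exp (-(1/2) * t) := texp_bound
      have hlb : ∀ᶠ t in atTop, (0:ℝ) ≤ Real.log t * Real.exp (-t) := by
        filter_upwards [eventually_ge_atTop (1:ℝ)] with t ht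
        exact mul_nonneg (Real.log_nonneg ht) (Real.exp_pos _).le
      have hexp : Tendsto (fun t : ℝ => 2 * Real.exp (-(1/2) * t)) atTop (nhds 0) := by
        rw [show (0:ℝ) = 2 * 0 by norm_num]
        apply Tendsto.const_mul
        have : Tendsto (fun t : ℝ => -(1/2) * t) atTop atBot :=
          tendsto_id.const_mul_atTop_of_neg (by norm_num)
        exact Real.tendsto_exp_atBot.comp this
        done
      exact tendsto_of_tendsto_of_tendsto_of_le_of_le' tendsto_const_nhds hexp hlb hub
    have := integral_Ioi_of_hasDerivAt_of_tendsto hcont hF hint htend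
    rw [this]
    simp [Real.log_one]
  have := integral_sub a3 a4
  rw [key] at this
  linarith

lemma part1 : ∫ t in Ioc (0:ℝ) 1, Real.log t * Real.exp (-t)
    = ∫ t in Ioc (0:ℝ) 1, (Real.exp (-t) - 1) / t := by
  set G : ℝ → ℝ := fun t => (Real.exp (-t) - 1) * Real.log t with hG
  have hcont : ContinuousOn G (Icc (0:ℝ) 1) := by
    intro x hx
    rcases eq_or_ne x 0 with rfl | hx0
    · -- continuity at 0 via squeeze
      have hG0 : G 0 = 0 := by simp [hG]
      unfold ContinuousWithinAt
      rw [hG0]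
      have hub : ∀ᶠ t in nhdsWithin 0 (Icc (0:ℝ) 1), G t ≤ 2 * t ^ ((1:ℝ)/2) := by
        filter_upwards [self_mem_nhdsWithin] with t ht
        rcases eq_or_ne t 0 with rfl | ht0
        · simp [hG0]
        · have h0 : 0 < t := lt_of_le_of_ne ht.1 (Ne.symm ht0)
          have hb := log_bound h0 ht.2
          have h1 : G t = (1 - Real.exp (-t)) * |Real.log t| := by
            rw [hG, abs_of_nonpos (Real.log_nonpos h0.le ht.2)]
            ring
          rw [h1]
          calc (1 - Real.exp (-t)) * |Real.log t| ≤ t * (2 * t ^ (-(1/2) : ℝ)) := by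
                apply mul_le_mul (one_sub_exp_neg_le h0.le) hb (abs_nonneg _) h0.le
            _ = 2 * t ^ ((1:ℝ)/2) := by
                rw [show ((1:ℝ)/2) = 1 + -(1/2) by norm_num, Real.rpow_add h0, Real.rpow_one]
                ring
      have hlb : ∀ᶠ t in nhdsWithin 0 (Icc (0:ℝ) 1), (0:ℝ) ≤ G t := by
        filter_upwards [self_mem_nhdsWithin] with t ht
        have hh1 : Real.exp (-t) - 1 ≤ 0 := by
          have := Real.exp_le_one_iff.mpr (by linarith [ht.1] : -t ≤ 0); linarith
        have hh2 : Real.log t ≤ 0 := Real.log_nonpos ht.1 ht.2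
        simp only [hG]
        nlinarith
      have hrt : Tendsto (fun t : ℝ => 2 * t ^ ((1:ℝ)/2)) (nhdsWithin 0 (Icc (0:ℝ) 1)) (nhds 0) := by
        have h := ((Real.continuousAt_rpow_const 0 ((1:ℝ)/2) (Or.inr (by norm_num))).tendsto).const_mul (2:ℝ)
        rw [Real.zero_rpow (by norm_num), mul_zero] at h
        exact h.mono_left nhdsWithin_le_nhds
      exact tendsto_of_tendsto_of_tendsto_of_le_of_le' tendsto_const_nhds hrt hlb hub
    · apply ContinuousAt.continuousWithinAt
      exact (((Real.continuous_exp.comp continuous_neg).continuousAt).sub continuousAt_const).mul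
        (Real.continuousAt_log hx0)
  have hderiv : ∀ x ∈ Ioo (0:ℝ) 1, HasDerivWithinAt G
      ((Real.exp (-x) - 1) / x - Real.log x * Real.exp (-x)) (Ioi x) x :=
    fun x hx => (hasDerivAt_G (ne_of_gt hx.1)).hasDerivWithinAt
  have hint : IntervalIntegrable (fun t => (Real.exp (-t) - 1) / t - Real.log t * Real.exp (-t))
      volume 0 1 := by
    rw [intervalIntegrable_iff_integrableOn_Ioc_of_le zero_le_one]
    exact a2.sub a1
  have := intervalIntegral.integral_eq_sub_of_hasDeriv_right_of_le zero_le_one hcont hderiv hint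
  rw [intervalIntegral.integral_of_le zero_le_one] at this
  have hG1 : G 1 = 0 := by simp [hG]
  have hG0 : G 0 = 0 := by simp [hG]
  rw [hG1, hG0, sub_zero] at this
  have h2 := integral_sub a2 a1
  rw [this] at h2
  linarith

lemma key1 : (∫ t in Ioc (0:ℝ) 1, (Real.exp (-t) - 1) / t) + (∫ t in Ioi (1:ℝ), Real.exp (-t) / t)
    = -Real.eulerMascheroniConstant := by
  have hsplit : ∫ t in Ioi (0:ℝ), Real.log t * Real.exp (-t)
      = (∫ t in Ioc (0:ℝ) 1, Real.log t * Real.exp (-t))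
        + ∫ t in Ioi (1:ℝ), Real.log t * Real.exp (-t) := by
    rw [← setIntegral_union (Set.Ioc_disjoint_Ioi le_rfl) measurableSet_Ioi a1 a3,
      Set.Ioc_union_Ioi_eq_Ioi zero_le_one]
  rw [← gamma_int, hsplit, part1, part2]

lemma real_exp_tsum (x : ℝ) : Real.exp x = ∑' n : ℕ, x ^ n / n.factorial := by
  rw [Real.exp_eq_exp_ℝ, NormedSpace.exp_eq_tsum_div]

lemma harmonic_le (n : ℕ) : (harmonic n : ℝ) ≤ n := by
  induction n with
  | zero => simp
  | succ n ih =>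
    rw [harmonic_succ]
    push_cast
    have h1 : ((n:ℝ)+1)⁻¹ ≤ 1 := by
      rw [← one_div, div_le_one (by positivity)]; linarith
    linarith

lemma harmonic_cast_nonneg (n : ℕ) : (0:ℝ) ≤ (harmonic n : ℝ) := by
  rcases Nat.eq_zero_or_pos n with rfl | h
  · simp
  · exact_mod_cast (harmonic_pos (by omega)).le

lemma sumH_summable : Summable (fun n : ℕ => (harmonic n : ℝ) / n.factorial) := by
  apply Summable.of_nonneg_of_le
    (fun n => div_nonneg (harmonic_cast_nonneg n) (by positivity))
    (fun n => ?_) (Real.summable_pow_div_factorial 2)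
  apply div_le_div_of_nonneg_right ?_ (by positivity)
  · exact (harmonic_le n).trans (by exact_mod_cast (Nat.lt_two_pow_self (n := n)).le)

lemma geom_eqon (n : ℕ) : Set.EqOn (fun v : ℝ => (1 - (1-v)^n) / v)
    (fun v : ℝ => ∑ k ∈ Finset.range n, (1-v)^k) (Ioc (0:ℝ) 1) := by
  intro v hv
  have hv0 : v ≠ 0 := ne_of_gt hv.1
  have hne : (1 : ℝ) - v ≠ 1 := by intro h; apply hv0; linarith [sub_eq_self.mp h]
  simp only
  rw [geom_sum_eq hne]
  rw [show (1:ℝ) - v - 1 = -v by ring, div_neg, ← neg_div, neg_sub]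

lemma harm_int (n : ℕ) : ∫ v in Ioc (0:ℝ) 1, (1 - (1-v)^n) / v = (harmonic n : ℝ) := by
  rw [setIntegral_congr_fun measurableSet_Ioc (geom_eqon n)]
  rw [integral_finset_sum _ (fun k _ => (Continuous.integrableOn_Ioc (by continuity)))]
  have hk : ∀ k : ℕ, ∫ v in Ioc (0:ℝ) 1, (1-v)^k = 1 / (k+1 : ℝ) := by
    intro k
    rw [← intervalIntegral.integral_of_le zero_le_one]
    rw [intervalIntegral.integral_comp_sub_left (fun x => x ^ k) 1]
    norm_num [integral_pow]
  simp_rw [hk]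
  rw [harmonic]
  push_cast
  simp [one_div]

lemma intOn (n : ℕ) : IntegrableOn (fun v : ℝ => (1 - (1-v)^n) / v) (Ioc (0:ℝ) 1) := by
  apply IntegrableOn.congr_fun ?_ (geom_eqon n).symm measurableSet_Ioc
  exact Continuous.integrableOn_Ioc (by continuity)

lemma nonneg_on (n : ℕ) {v : ℝ} (hv : v ∈ Ioc (0:ℝ) 1) : 0 ≤ (1 - (1-v)^n) / v := by
  apply div_nonneg ?_ hv.1.le
  have h1 : (1 - v) ^ n ≤ 1 := by
    apply pow_le_one₀ (by linarith [hv.2]) (by linarith [hv.1])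
  linarith

lemma sumH_eq : ∑' n : ℕ, (harmonic n : ℝ) / n.factorial
    = ∫ v in Ioc (0:ℝ) 1, (Real.exp 1 - Real.exp (1 - v)) / v := by
  have hmeas : ∀ n : ℕ, AEStronglyMeasurable
      (fun v : ℝ => ((1 - (1-v)^n) / v) / n.factorial) (volume.restrict (Ioc (0:ℝ) 1)) := by
    intro n
    apply Measurable.aestronglyMeasurable
    exact (((measurable_const.sub ((measurable_const.sub measurable_id).pow_const n)).div
      measurable_id).div_const _)
  have hint : ∀ n : ℕ, IntegrableOn (fun v : ℝ => ((1 - (1-v)^n) / v) / n.factorial)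
      (Ioc (0:ℝ) 1) := fun n => (intOn n).div_const _
  have hval : ∀ n : ℕ, ∫ v in Ioc (0:ℝ) 1, ((1 - (1-v)^n) / v) / n.factorial
      = (harmonic n : ℝ) / n.factorial := by
    intro n
    rw [integral_div, harm_int n]
  have hlint : ∀ n : ℕ, ∫⁻ v in Ioc (0:ℝ) 1, ‖((1 - (1-v)^n) / v) / n.factorial‖ₑ
      = ENNReal.ofReal ((harmonic n : ℝ) / n.factorial) := by
    intro n
    rw [← hval n, ofReal_integral_eq_lintegral_ofReal (hint n)
      (Filter.eventually_iff_exists_mem.mpr ⟨_, ae_restrict_mem measurableSet_Ioc,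
        fun v hv => div_nonneg (nonneg_on n hv) (by positivity)⟩)]
    apply lintegral_congr_ae
    filter_upwards [ae_restrict_mem measurableSet_Ioc] with v hv
    rw [← Real.enorm_eq_ofReal (div_nonneg (nonneg_on n hv) (by positivity))]
  have hsum := MeasureTheory.integral_tsum (μ := volume.restrict (Ioc (0:ℝ) 1)) hmeas ?_
  · calc ∑' n : ℕ, (harmonic n : ℝ) / n.factorial
        = ∑' n : ℕ, ∫ v in Ioc (0:ℝ) 1, ((1 - (1-v)^n) / v) / n.factorial := by
          exact tsum_congr fun n => (hval n).symm
      _ = ∫ v in Ioc (0:ℝ) 1, ∑' n : ℕ, ((1 - (1-v)^n) / v) / n.factorial := hsum.symm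
      _ = ∫ v in Ioc (0:ℝ) 1, (Real.exp 1 - Real.exp (1 - v)) / v := by
          apply setIntegral_congr_fun measurableSet_Ioc
          intro v hv
          simp only
          have h1 : ∀ n : ℕ, ((1 - (1-v)^n) / v) / n.factorial
              = ((1 - (1-v)^n) / n.factorial) / v := fun n => div_right_comm _ _ _
          simp_rw [h1]
          rw [tsum_div_const]
          congr 1
          have hs1 : Summable (fun n : ℕ => (1:ℝ) ^ n / n.factorial) :=
            Real.summable_pow_div_factorial 1
          have hs2 : Summable (fun n : ℕ => (1 - v) ^ n / n.factorial) :=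
            Real.summable_pow_div_factorial (1 - v)
          have : ∀ n : ℕ, (1 - (1-v)^n) / (n.factorial : ℝ)
              = (1:ℝ)^n / n.factorial - (1-v)^n / n.factorial := by
            intro n; rw [one_pow, sub_div]
          simp_rw [this]
          rw [Summable.tsum_sub hs1 hs2, ← real_exp_tsum 1, ← real_exp_tsum (1 - v)]
  · simp_rw [hlint]
    rw [← ENNReal.ofReal_tsum_of_nonneg
      (fun n => div_nonneg (harmonic_cast_nonneg n) (by positivity)) sumH_summable]
    exact ENNReal.ofReal_ne_top

/-- `L₂ = 1 - ∑_{n=0}^∞ Γ'(n+1)/Γ(n+1)² = 1 + e·Ei(-1)`. -/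
theorem L2_eq :
    1 - (∑' n : ℕ, deriv Real.Gamma (n + 1) / (Real.Gamma (n + 1)) ^ 2) =
      1 + Real.exp 1 * EiNegOne := by
  set γ := Real.eulerMascheroniConstant
  set I1 := ∫ t in Ioc (0:ℝ) 1, (Real.exp (-t) - 1) / t with hI1
  set I2 := ∫ t in Ioi (1:ℝ), Real.exp (-t) / t with hI2
  have s1 : Summable (fun n : ℕ => (1:ℝ) / n.factorial) := by
    simpa using Real.summable_pow_div_factorial 1
  have term_eq : ∀ n : ℕ, deriv Real.Gamma (n + 1) / (Real.Gamma (n + 1)) ^ 2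
      = (harmonic n : ℝ) / n.factorial - γ * ((1:ℝ) / n.factorial) := by
    intro n
    rw [Real.deriv_Gamma_nat n, Real.Gamma_nat_eq_factorial n]
    have hf : (n.factorial : ℝ) ≠ 0 := by positivity
    field_simp
    ring
  have hS : (∑' n : ℕ, deriv Real.Gamma (n + 1) / (Real.Gamma (n + 1)) ^ 2)
      = (∑' n : ℕ, (harmonic n : ℝ) / n.factorial) - γ * Real.exp 1 := by
    calc (∑' n : ℕ, deriv Real.Gamma (n + 1) / (Real.Gamma (n + 1)) ^ 2)
        = ∑' n : ℕ, ((harmonic n : ℝ) / n.factorial - γ * ((1:ℝ) / n.factorial)) :=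
          tsum_congr term_eq
      _ = (∑' n : ℕ, (harmonic n : ℝ) / n.factorial)
            - ∑' n : ℕ, γ * ((1:ℝ) / n.factorial) :=
          Summable.tsum_sub sumH_summable (s1.mul_left γ)
      _ = (∑' n : ℕ, (harmonic n : ℝ) / n.factorial) - γ * Real.exp 1 := by
          rw [tsum_mul_left]
          congr 2
          rw [real_exp_tsum 1]
          exact tsum_congr fun n => by rw [one_pow]
  have hsum2 : (∑' n : ℕ, (harmonic n : ℝ) / n.factorial) = -Real.exp 1 * I1 := by
    rw [sumH_eq, hI1]
    have hfun : (fun v : ℝ => (Real.exp 1 - Real.exp (1 - v)) / v)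
        = fun v : ℝ => (-Real.exp 1) * ((Real.exp (-v) - 1) / v) := by
      funext v
      rw [← mul_div_assoc]
      congr 1
      rw [show (1:ℝ) - v = 1 + (-v) by ring, Real.exp_add]
      ring
    rw [hfun, MeasureTheory.integral_const_mul]
  have hγeq : γ = -(I1 + I2) := by linarith [key1]
  have hfin : (∑' n : ℕ, deriv Real.Gamma (n + 1) / (Real.Gamma (n + 1)) ^ 2)
      = Real.exp 1 * I2 := by
    rw [hS, hsum2, hγeq]; ring
  rw [hfin, EiNegOne, ← hI2]
  ring

end L2aux
end

section
/- For every natural number n ≥ 2, the residue of the alternating Kurepa function A(z) at z = −n equals (−1)^n · Σ_{k=0}^{n−2} 1/k!. -/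
open Filter Topology MeasureTheory

/-- The upper incomplete Gamma function `Γ(a,1) = ∫_1^∞ e^{-t} t^{a-1} dt`. -/
noncomputable def GammaIncAtOne (a : ℂ) : ℂ :=
  ∫ t in Set.Ioi (1 : ℝ), Real.exp (-t) * (t : ℂ) ^ (a - 1)

/-- The alternating Kurepa function (meromorphic continuation to `ℂ`), via the
representation `A(z) = -(1 + e·Ei(-1))·(-1)^z + e·Γ(z+2)·Γ(-z-1,1)`. -/
noncomputable def altKurepa (z : ℂ) : ℂ :=
  -((1 : ℂ) + Real.exp 1 * EiNegOne) * (-1 : ℂ) ^ z +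
    Real.exp 1 * Complex.Gamma (z + 2) * GammaIncAtOne (-z - 1)

section Aux

open Set

lemma gamma_residue_aux (m : ℕ) :
    Tendsto (fun w : ℂ => (w + m) * Complex.Gamma w) (𝓝[≠] (-(m : ℂ)))
      (𝓝 ((-1) ^ m / (m.factorial : ℂ))) := by
  induction m with
  | zero => simpa using Complex.tendsto_self_mul_Gamma_nhds_zero
  | succ m ih =>
    have hne : (-((m + 1 : ℕ) : ℂ)) ≠ 0 := by
      simp only [ne_eq, neg_eq_zero, Nat.cast_eq_zero]
      omega
    have hshift : Tendsto (fun w : ℂ => w + 1) (𝓝[≠] (-((m + 1 : ℕ) : ℂ)))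
        (𝓝[≠] (-(m : ℂ))) := by
      rw [tendsto_nhdsWithin_iff]
      constructor
      · have h := (continuous_add_right (1 : ℂ)).tendsto (-((m + 1 : ℕ) : ℂ))
        have : -((m + 1 : ℕ) : ℂ) + 1 = -(m : ℂ) := by push_cast; ring
        rw [this] at h
        exact h.mono_left nhdsWithin_le_nhds
      · filter_upwards [self_mem_nhdsWithin] with w hw
        intro h
        apply hw
        simp only [Set.mem_singleton_iff] at h ⊢
        push_cast
        linear_combination h
    have hinv : Tendsto (fun w : ℂ => w⁻¹) (𝓝[≠] (-((m + 1 : ℕ) : ℂ)))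
        (𝓝 (-((m + 1 : ℕ) : ℂ))⁻¹) :=
      (continuousAt_inv₀ hne).tendsto.mono_left nhdsWithin_le_nhds
    have h0 : ∀ᶠ w : ℂ in 𝓝[≠] (-((m + 1 : ℕ) : ℂ)), w ≠ 0 :=
      (eventually_ne_nhds hne).filter_mono nhdsWithin_le_nhds
    have key : Tendsto (fun w : ℂ => ((w + 1) + m) * Complex.Gamma (w + 1) * w⁻¹)
        (𝓝[≠] (-((m + 1 : ℕ) : ℂ)))
        (𝓝 ((-1) ^ m / (m.factorial : ℂ) * (-((m + 1 : ℕ) : ℂ))⁻¹)) :=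
      (ih.comp hshift).mul hinv
    have heq : ∀ᶠ w : ℂ in 𝓝[≠] (-((m + 1 : ℕ) : ℂ)),
        ((w + 1) + m) * Complex.Gamma (w + 1) * w⁻¹ =
          (w + ((m + 1 : ℕ) : ℂ)) * Complex.Gamma w := by
      filter_upwards [h0] with w hw
      rw [Complex.Gamma_add_one w hw]
      field_simp
      push_cast
      ring
    have hm : ((m.factorial : ℂ)) ≠ 0 := Nat.cast_ne_zero.2 m.factorial_ne_zero
    have hconst : (-1 : ℂ) ^ m / (m.factorial : ℂ) * (-((m + 1 : ℕ) : ℂ))⁻¹ =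
        (-1) ^ (m + 1) / ((m + 1).factorial : ℂ) := by
      rw [Nat.factorial_succ, pow_succ]
      push_cast
      rw [inv_neg]
      field_simp
    rw [hconst] at key
    exact key.congr' heq

lemma gammaInc_continuousAt_aux (a₀ : ℂ) : ContinuousAt GammaIncAtOne a₀ := by
  set R : ℝ := max a₀.re 0 with hR
  have hR0 : 0 < R + 1 := by positivity
  apply continuousAt_of_dominated (bound := fun t => Real.exp (-t) * t ^ R)
  · filter_upwards with a
    apply ContinuousOn.aestronglyMeasurable ?_ measurableSet_Ioi
    intro t ht
    have ht0 : (0:ℝ) < t := lt_trans one_pos ht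
    apply ContinuousWithinAt.mul
    · exact (Complex.continuous_ofReal.comp
        (Real.continuous_exp.comp continuous_neg)).continuousWithinAt
    · exact (Complex.continuousAt_ofReal_cpow_const t (a - 1) (Or.inr ht0.ne')).continuousWithinAt
  · have hopen : IsOpen {a : ℂ | a.re < R + 1} := isOpen_lt Complex.continuous_re continuous_const
    have hmem : a₀ ∈ {a : ℂ | a.re < R + 1} := by
      simp only [Set.mem_setOf_eq, hR]
      have : a₀.re ≤ max a₀.re 0 := le_max_left _ _
      linarith
    filter_upwards [hopen.mem_nhds hmem] with a ha
    rw [ae_restrict_iff' measurableSet_Ioi]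
    filter_upwards with t ht
    have ht0 : (0:ℝ) < t := lt_trans one_pos ht
    rw [norm_mul,
      Complex.norm_cpow_eq_rpow_re_of_pos ht0, Complex.norm_real, Real.norm_eq_abs,
      abs_of_pos (Real.exp_pos _)]
    apply mul_le_mul_of_nonneg_left _ (Real.exp_pos _).le
    apply Real.rpow_le_rpow_of_exponent_le ht.le
    have : a.re < R + 1 := ha
    simp only [Complex.sub_re, Complex.one_re]
    linarith
  · have h := Real.GammaIntegral_convergent hR0
    have h2 : IntegrableOn (fun x : ℝ => Real.exp (-x) * x ^ (R + 1 - 1)) (Ioi 1) :=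
      h.mono_set (Set.Ioi_subset_Ioi zero_le_one)
    have h3 : IntegrableOn (fun t : ℝ => Real.exp (-t) * t ^ R) (Ioi 1) := by simpa using h2
    exact h3
  · rw [ae_restrict_iff' measurableSet_Ioi]
    filter_upwards with t ht
    have ht0 : (0:ℝ) < t := lt_trans one_pos ht
    apply ContinuousAt.mul continuousAt_const
    exact (continuousAt_const_cpow (by simpa using ht0.ne')).comp
      (continuousAt_id.sub continuousAt_const)

lemma integrable_exp_pow_aux (m : ℕ) :
    IntegrableOn (fun t : ℝ => Real.exp (-t) * t ^ m) (Ioi 1) := by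
  have h : IntegrableOn (fun x : ℝ => Real.exp (-x) * x ^ ((m + 1 : ℝ) - 1)) (Ioi 1) :=
    (Real.GammaIntegral_convergent (by positivity : (0:ℝ) < m + 1)).mono_set
      (Set.Ioi_subset_Ioi zero_le_one)
  apply h.congr_fun ?_ measurableSet_Ioi
  intro t ht
  have ht0 : (0:ℝ) < t := lt_trans one_pos ht
  simp only [add_sub_cancel_right]
  rw [Real.rpow_natCast]

lemma int_exp_pow_aux (m : ℕ) : ∫ t in Ioi (1:ℝ), Real.exp (-t) * t ^ m
    = Real.exp (-1) * ∑ k ∈ Finset.range (m + 1), (m.factorial / k.factorial : ℝ) := by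
  induction m with
  | zero => simpa using integral_exp_neg_Ioi 1
  | succ m ih =>
    have hderiv : ∀ t ∈ Ioi (1:ℝ), HasDerivAt (fun t : ℝ => -Real.exp (-t) * t ^ (m + 1))
        (Real.exp (-t) * t ^ (m + 1) - ((m : ℝ) + 1) * (Real.exp (-t) * t ^ m)) t := by
      intro t _
      have h1 : HasDerivAt (fun t : ℝ => Real.exp (-t)) (-Real.exp (-t)) t := by
        simpa using (hasDerivAt_neg t).exp
      have := (h1.neg.mul (hasDerivAt_pow (m + 1) t))
      refine this.congr_deriv ?_
      simp only [Nat.add_sub_cancel, Pi.neg_apply]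
      push_cast
      ring
    have hcont : ContinuousWithinAt (fun t : ℝ => -Real.exp (-t) * t ^ (m + 1)) (Ici 1) 1 :=
      (((Real.continuous_exp.comp continuous_neg).neg).mul (continuous_pow _)).continuousWithinAt
    have hint : IntegrableOn
        (fun t : ℝ => Real.exp (-t) * t ^ (m + 1) - ((m : ℝ) + 1) * (Real.exp (-t) * t ^ m))
        (Ioi 1) := (integrable_exp_pow_aux (m + 1)).sub ((integrable_exp_pow_aux m).const_mul _)
    have htend : Tendsto (fun t : ℝ => -Real.exp (-t) * t ^ (m + 1)) atTop (𝓝 0) := by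
      have := (Real.tendsto_pow_mul_exp_neg_atTop_nhds_zero (m + 1)).neg
      simp only [neg_zero] at this
      apply this.congr
      intro x; ring
    have key := integral_Ioi_of_hasDerivAt_of_tendsto hcont hderiv hint htend
    rw [integral_sub (integrable_exp_pow_aux (m + 1)) ((integrable_exp_pow_aux m).const_mul _),
      MeasureTheory.integral_const_mul, ih] at key
    simp only [one_pow, mul_one, zero_sub, neg_neg] at key
    have : ∫ t in Ioi (1:ℝ), Real.exp (-t) * t ^ (m + 1)
        = ((m:ℝ) + 1) * (Real.exp (-1) * ∑ k ∈ Finset.range (m + 1), (m.factorial / k.factorial : ℝ))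
          + Real.exp (-1) := by
      linarith [key]
    rw [this]
    conv_rhs => rw [Finset.sum_range_succ]
    have hlast : ((m+1).factorial / (m+1).factorial : ℝ) = 1 := by
      rw [div_self]; exact_mod_cast Nat.cast_ne_zero.2 (m+1).factorial_ne_zero
    have hsum : ∑ k ∈ Finset.range (m+1), ((m+1).factorial / k.factorial : ℝ)
        = ((m:ℝ)+1) * ∑ k ∈ Finset.range (m+1), (m.factorial / k.factorial : ℝ) := by
      rw [Finset.mul_sum]
      apply Finset.sum_congr rfl
      intro k _
      rw [Nat.factorial_succ]; push_cast; ring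
    rw [hsum, hlast]
    ring

lemma gammaInc_val_aux (n : ℕ) (hn : 2 ≤ n) :
    GammaIncAtOne ((n : ℂ) - 1) =
      ((Real.exp (-1) * ∑ k ∈ Finset.range (n - 2 + 1),
        ((n - 2).factorial / k.factorial : ℝ) : ℝ) : ℂ) := by
  unfold GammaIncAtOne
  have hcast : ((n : ℂ) - 1) - 1 = ((n - 2 : ℕ) : ℂ) := by
    rw [Nat.cast_sub hn]; push_cast; ring
  rw [← int_exp_pow_aux (n - 2)]
  refine Eq.trans ?_ (integral_ofReal (𝕜 := ℂ))
  apply setIntegral_congr_fun measurableSet_Ioi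
  intro t ht
  have ht0 : (0:ℝ) < t := lt_trans one_pos ht
  simp only
  rw [hcast, Complex.cpow_natCast]
  norm_cast

end Aux

/-- For `n ≥ 2`, the residue of `A(z)` at `z = -n` is `(-1)^n ∑_{k=0}^{n-2} 1/k!`. -/
theorem altKurepa_residue (n : ℕ) (hn : 2 ≤ n) :
    Tendsto (fun z : ℂ => (z + (n : ℂ)) * altKurepa z) (𝓝[≠] (-(n : ℂ)))
      (𝓝 ((-1 : ℂ) ^ n * ∑ k ∈ Finset.range (n - 1), (1 : ℂ) / (k.factorial : ℂ))) := by
  set m : ℕ := n - 2 with hm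
  have hmn : m + 2 = n := by omega
  have hcastm : ((m : ℂ)) = (n : ℂ) - 2 := by
    rw [← hmn]; push_cast; ring
  -- first term tends to 0
  have T1 : Tendsto (fun z : ℂ => (z + (n : ℂ)) *
      (-((1 : ℂ) + Real.exp 1 * EiNegOne) * (-1 : ℂ) ^ z)) (𝓝[≠] (-(n : ℂ))) (𝓝 0) := by
    have h1 : Tendsto (fun z : ℂ => z + (n : ℂ)) (𝓝[≠] (-(n : ℂ))) (𝓝 0) := by
      have := (continuous_add_right ((n : ℂ))).tendsto (-(n : ℂ))
      simp only [neg_add_cancel] at this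
      exact this.mono_left nhdsWithin_le_nhds
    have h2 : Tendsto (fun z : ℂ => -((1 : ℂ) + Real.exp 1 * EiNegOne) * (-1 : ℂ) ^ z)
        (𝓝[≠] (-(n : ℂ)))
        (𝓝 (-((1 : ℂ) + Real.exp 1 * EiNegOne) * (-1 : ℂ) ^ (-(n : ℂ)))) := by
      apply Tendsto.mono_left _ nhdsWithin_le_nhds
      exact (continuousAt_const.mul (continuousAt_const_cpow (by norm_num))).tendsto
    simpa using h1.mul h2
  -- second term
  have hshift2 : Tendsto (fun z : ℂ => z + 2) (𝓝[≠] (-(n : ℂ))) (𝓝[≠] (-(m : ℂ))) := by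
    rw [tendsto_nhdsWithin_iff]
    constructor
    · have h := (continuous_add_right (2 : ℂ)).tendsto (-(n : ℂ))
      have : -(n : ℂ) + 2 = -(m : ℂ) := by rw [hcastm]; ring
      rw [this] at h
      exact h.mono_left nhdsWithin_le_nhds
    · filter_upwards [self_mem_nhdsWithin] with w hw
      intro h
      apply hw
      simp only [Set.mem_singleton_iff] at h ⊢
      rw [hcastm] at h
      linear_combination h
  have hGamma : Tendsto (fun z : ℂ => (z + (n : ℂ)) * Complex.Gamma (z + 2))
      (𝓝[≠] (-(n : ℂ))) (𝓝 ((-1) ^ m / (m.factorial : ℂ))) := by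
    have := (gamma_residue_aux m).comp hshift2
    apply this.congr
    intro z
    simp only [Function.comp_apply]
    rw [hcastm]
    ring_nf
  have hIncCont : Tendsto (fun z : ℂ => GammaIncAtOne (-z - 1)) (𝓝[≠] (-(n : ℂ)))
      (𝓝 (GammaIncAtOne ((n : ℂ) - 1))) := by
    have hmap : Tendsto (fun z : ℂ => -z - 1) (𝓝 (-(n : ℂ))) (𝓝 ((n : ℂ) - 1)) := by
      have hc : Continuous fun z : ℂ => -z - 1 := by continuity
      have := hc.tendsto (-(n : ℂ))
      simpa using this
    exact ((gammaInc_continuousAt_aux ((n : ℂ) - 1)).tendsto.comp hmap).mono_left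
      nhdsWithin_le_nhds
  have T2 : Tendsto (fun z : ℂ => (Real.exp 1 : ℂ) * ((z + (n : ℂ)) * Complex.Gamma (z + 2)) *
      GammaIncAtOne (-z - 1)) (𝓝[≠] (-(n : ℂ)))
      (𝓝 ((Real.exp 1 : ℂ) * ((-1) ^ m / (m.factorial : ℂ)) * GammaIncAtOne ((n : ℂ) - 1))) :=
    ((tendsto_const_nhds.mul hGamma).mul hIncCont)
  have Tsum := T1.add T2
  rw [zero_add] at Tsum
  have hfun : (fun z : ℂ => (z + (n : ℂ)) * altKurepa z) =
      fun z : ℂ => (z + (n : ℂ)) * (-((1 : ℂ) + Real.exp 1 * EiNegOne) * (-1 : ℂ) ^ z) +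
        (Real.exp 1 : ℂ) * ((z + (n : ℂ)) * Complex.Gamma (z + 2)) * GammaIncAtOne (-z - 1) := by
    funext z
    unfold altKurepa
    ring
  rw [hfun]
  convert Tsum using 2
  -- constant computation
  rw [gammaInc_val_aux n hn]
  have hfac : ((m.factorial : ℂ)) ≠ 0 := Nat.cast_ne_zero.2 m.factorial_ne_zero
  have hexp : ((Real.exp 1 : ℝ) : ℂ) * ((Real.exp (-1) : ℝ) : ℂ) = 1 := by
    rw [← Complex.ofReal_mul, ← Real.exp_add]
    norm_num
  have hpow : (-1 : ℂ) ^ m = (-1 : ℂ) ^ n := by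
    rw [← hmn, pow_add]
    norm_num
  have hrange : n - 2 + 1 = n - 1 := by omega
  rw [hrange, Complex.ofReal_mul, hpow]
  set S : ℂ := ∑ k ∈ Finset.range (n - 1), (1 : ℂ) / (k.factorial : ℂ) with hS
  have hsum : ((∑ k ∈ Finset.range (n - 1), (((n - 2).factorial : ℝ) / (k.factorial : ℝ)) : ℝ) : ℂ)
      = (m.factorial : ℂ) * S := by
    rw [hS]
    push_cast
    rw [Finset.mul_sum]
    apply Finset.sum_congr rfl
    intro k _
    rw [hm, mul_one_div]
  rw [hsum]
  symm
  calc ((Real.exp 1 : ℝ) : ℂ) * ((-1 : ℂ) ^ n / (m.factorial : ℂ))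
        * (((Real.exp (-1) : ℝ) : ℂ) * ((m.factorial : ℂ) * S))
      = (((Real.exp 1 : ℝ) : ℂ) * ((Real.exp (-1) : ℝ) : ℂ))
          * (((m.factorial : ℂ) / (m.factorial : ℂ)) * ((-1 : ℂ) ^ n * S)) := by ring
    _ = (-1 : ℂ) ^ n * S := by rw [hexp, div_self hfac, one_mul, one_mul]
end
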